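/- Let p be a prime, k an algebraically closed field of characteristic p, and G = SL₂(F_p) (or GL₂(F_p)) acting on Sym^{p-1}(k²). Then for the Borel subgroup B(F_p) of upper triangular matrices, the induced representation Ind_{B(F_p)}^{GL₂(F_p)}(1) of the trivial character decomposes as a direct sum of the trivial representation Sym⁰ and Sym^{p-1}. -/

import Mathlib

open MvPolynomial

/-- Linear substitution action of a 2×2 matrix over `F_p` on two-variable polynomials over a
field `k` of characteristic `p`. -/
noncomputable def symAct (p : ℕ) [Fact p.Prime] (k : Type) [Field k] [CharP k p]
    (g : Matrix (Fin 2) (Fin 2) (ZMod p)) :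
    MvPolynomial (Fin 2) k →ₐ[k] MvPolynomial (Fin 2) k :=
  aeval (fun i => ∑ j : Fin 2, (ZMod.castHom (dvd_refl p) k (g j i)) • (X j : MvPolynomial (Fin 2) k))

/-- The induction to `GL₂(F_p)` of the trivial character of the Borel subgroup `B(F_p)`:
`k`-valued functions on `GL₂(F_p)` that are invariant under left translation by upper
triangular matrices. -/
def IndTriv (p : ℕ) [Fact p.Prime] (k : Type) [Field k] :
    Submodule k (GL (Fin 2) (ZMod p) → k) where
  carrier := {f | ∀ b g : GL (Fin 2) (ZMod p),
    (b : Matrix (Fin 2) (Fin 2) (ZMod p)) 1 0 = 0 → f (b * g) = f g}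
  add_mem' := by
    intro f₁ f₂ h₁ h₂ b g hb
    simp [Pi.add_apply, h₁ b g hb, h₂ b g hb]
  zero_mem' := by intro b g hb; simp
  smul_mem' := by
    intro c f hf b g hb
    simp [Pi.smul_apply, hf b g hb]

namespace IndDecompAux
set_option linter.unusedSectionVars false

open Matrix Finset

variable {p : ℕ} [Fact p.Prime] {k : Type} [Field k] [CharP k p]

/-- cast from `ZMod p` to `k` -/
noncomputable def cst (p : ℕ) [Fact p.Prime] (k : Type) [Field k] [CharP k p] :
    ZMod p →+* k := ZMod.castHom (dvd_refl p) k

lemma fin2_degree (d : Fin 2 →₀ ℕ) : d.degree = d 0 + d 1 := by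
  rw [Finsupp.degree, ← Fin.sum_univ_two (f := fun i => d i)]
  exact Finset.sum_subset (Finset.subset_univ _)
    (fun i _ hi => Finsupp.notMem_support_iff.mp hi)

lemma homog_deg {P : MvPolynomial (Fin 2) k} {n : ℕ} (h : P.IsHomogeneous n)
    {d : Fin 2 →₀ ℕ} (hd : coeff d P ≠ 0) : d 0 + d 1 = n := by
  have h1 := h hd
  replace h1 : d.degree = n := by rw [Finsupp.degree_eq_weight_one]; exact h1
  rw [← fin2_degree]; exact h1

lemma eval_mul_homog {P : MvPolynomial (Fin 2) k} {n : ℕ} (h : P.IsHomogeneous n)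
    (a : k) (v : Fin 2 → k) :
    eval (fun i => a * v i) P = a ^ n * eval v P := by
  rw [eval_eq', eval_eq', Finset.mul_sum]
  apply Finset.sum_congr rfl
  intro d hd
  have hdeg : d 0 + d 1 = n := homog_deg h (mem_support_iff.mp hd)
  rw [Fin.prod_univ_two, Fin.prod_univ_two, mul_pow, mul_pow, ← hdeg, pow_add]
  ring

lemma gl_det_ne_zero (g : GL (Fin 2) (ZMod p)) :
    ((g : Matrix (Fin 2) (Fin 2) (ZMod p))).det ≠ 0 := by
  have h : IsUnit (g : Matrix (Fin 2) (Fin 2) (ZMod p)) := ⟨g, rfl⟩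
  exact ((Matrix.isUnit_iff_isUnit_det _).mp h).ne_zero

lemma gl_b11_ne (b : GL (Fin 2) (ZMod p))
    (hb : (b : Matrix (Fin 2) (Fin 2) (ZMod p)) 1 0 = 0) :
    (b : Matrix (Fin 2) (Fin 2) (ZMod p)) 1 1 ≠ 0 := by
  intro h
  apply gl_det_ne_zero b
  rw [Matrix.det_fin_two, hb, h]
  ring

noncomputable def phiFun (p : ℕ) [Fact p.Prime] (k : Type) [Field k] [CharP k p]
    (Q : MvPolynomial (Fin 2) k) (g : GL (Fin 2) (ZMod p)) : k :=
  eval (fun i => cst p k ((g : Matrix (Fin 2) (Fin 2) (ZMod p)) 1 i)) Q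

lemma phiFun_mem {c P : MvPolynomial (Fin 2) k} (hc : c.IsHomogeneous 0)
    (hP : P.IsHomogeneous (p - 1)) : phiFun p k (c + P) ∈ IndTriv p k := by
  intro b g hb
  have hrow : ∀ i, ((b * g : GL (Fin 2) (ZMod p)) : Matrix (Fin 2) (Fin 2) (ZMod p)) 1 i
      = (b : Matrix (Fin 2) (Fin 2) (ZMod p)) 1 1 * (g : Matrix (Fin 2) (Fin 2) (ZMod p)) 1 i := by
    intro i
    show ((b : Matrix (Fin 2) (Fin 2) (ZMod p)) * (g : Matrix (Fin 2) (Fin 2) (ZMod p))) 1 i = _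
    rw [Matrix.mul_apply, Fin.sum_univ_two, hb, zero_mul, zero_add]
  unfold phiFun
  have hfun : (fun i => cst p k (((b * g : GL (Fin 2) (ZMod p)) :
        Matrix (Fin 2) (Fin 2) (ZMod p)) 1 i))
      = fun i => cst p k ((b : Matrix (Fin 2) (Fin 2) (ZMod p)) 1 1) *
          cst p k ((g : Matrix (Fin 2) (Fin 2) (ZMod p)) 1 i) := by
    funext i; rw [hrow i, _root_.map_mul]
  rw [hfun, map_add, map_add, eval_mul_homog hc, eval_mul_homog hP, pow_zero, one_mul,
    ← map_pow, ZMod.pow_card_sub_one_eq_one (gl_b11_ne b hb), _root_.map_one, one_mul]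

lemma indtriv_row_eq {f : GL (Fin 2) (ZMod p) → k} (hf : f ∈ IndTriv p k)
    {g h : GL (Fin 2) (ZMod p)} (a : ZMod p)
    (hrow : ∀ i, (g : Matrix (Fin 2) (Fin 2) (ZMod p)) 1 i
      = a * (h : Matrix (Fin 2) (Fin 2) (ZMod p)) 1 i) : f g = f h := by
  have hb : ((g * h⁻¹ : GL (Fin 2) (ZMod p)) : Matrix (Fin 2) (Fin 2) (ZMod p)) 1 0 = 0 := by
    have key : ((g * h⁻¹ : GL (Fin 2) (ZMod p)) : Matrix (Fin 2) (Fin 2) (ZMod p)) 1 0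
        = a * ((h * h⁻¹ : GL (Fin 2) (ZMod p)) : Matrix (Fin 2) (Fin 2) (ZMod p)) 1 0 := by
      show ((g : Matrix (Fin 2) (Fin 2) (ZMod p)) *
          ((h⁻¹ : GL (Fin 2) (ZMod p)) : Matrix (Fin 2) (Fin 2) (ZMod p))) 1 0
        = a * (((h : Matrix (Fin 2) (Fin 2) (ZMod p)) *
          ((h⁻¹ : GL (Fin 2) (ZMod p)) : Matrix (Fin 2) (Fin 2) (ZMod p))) 1 0)
      rw [Matrix.mul_apply, Matrix.mul_apply, Fin.sum_univ_two, Fin.sum_univ_two,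
        hrow 0, hrow 1]
      ring
    rw [key, mul_inv_cancel]
    show a * (1 : Matrix (Fin 2) (Fin 2) (ZMod p)) 1 0 = 0
    rw [Matrix.one_apply_ne (by decide)]
    ring
  have := hf (g * h⁻¹) h hb
  rwa [inv_mul_cancel_right] at this

def wv (p : ℕ) (o : Option (ZMod p)) : Fin 2 → ZMod p :=
  Option.rec ![0, 1] (fun t => ![1, t]) o

def gwM (p : ℕ) (o : Option (ZMod p)) : Matrix (Fin 2) (Fin 2) (ZMod p) :=
  Option.rec !![1, 0; 0, 1] (fun t => !![0, -1; 1, t]) o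

lemma gwM_det (o : Option (ZMod p)) : (gwM p o).det ≠ 0 := by
  cases o <;> simp [gwM, Matrix.det_fin_two_of]

noncomputable def gw (p : ℕ) [Fact p.Prime] (o : Option (ZMod p)) : GL (Fin 2) (ZMod p) :=
  Matrix.GeneralLinearGroup.mkOfDetNeZero (gwM p o) (gwM_det o)

lemma gw_row (o : Option (ZMod p)) (i : Fin 2) :
    ((gw p o : GL (Fin 2) (ZMod p)) : Matrix (Fin 2) (Fin 2) (ZMod p)) 1 i = wv p o i := by
  cases o <;> fin_cases i <;> rfl

lemma exists_rep (g : GL (Fin 2) (ZMod p)) :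
    ∃ (o : Option (ZMod p)) (a : ZMod p), a ≠ 0 ∧
      ∀ i, (g : Matrix (Fin 2) (Fin 2) (ZMod p)) 1 i = a * wv p o i := by
  by_cases h0 : (g : Matrix (Fin 2) (Fin 2) (ZMod p)) 1 0 = 0
  · refine ⟨none, (g : Matrix (Fin 2) (Fin 2) (ZMod p)) 1 1, gl_b11_ne g h0, fun i => ?_⟩
    fin_cases i
    · simpa [wv] using h0
    · simp [wv]
  · refine ⟨some ((g : Matrix (Fin 2) (Fin 2) (ZMod p)) 1 1 /
      (g : Matrix (Fin 2) (Fin 2) (ZMod p)) 1 0), (g : Matrix (Fin 2) (Fin 2) (ZMod p)) 1 0,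
      h0, fun i => ?_⟩
    fin_cases i
    · simp [wv]
    · show _ = _ * (![1, _] 1)
      rw [Matrix.cons_val_one, Matrix.cons_val_zero, eq_comm, mul_comm]
      exact div_mul_cancel₀ _ h0

lemma exists_GL_row (v : Fin 2 → ZMod p) (hv : v 0 ≠ 0 ∨ v 1 ≠ 0) :
    ∃ g : GL (Fin 2) (ZMod p), ∀ i, (g : Matrix (Fin 2) (Fin 2) (ZMod p)) 1 i = v i := by
  by_cases h0 : v 0 = 0
  · have h1 : v 1 ≠ 0 := by tauto
    refine ⟨Matrix.GeneralLinearGroup.mkOfDetNeZero !![1, 0; v 0, v 1] ?_, fun i => ?_⟩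
    · rw [Matrix.det_fin_two_of]; simpa using h1
    · fin_cases i <;> rfl
  · refine ⟨Matrix.GeneralLinearGroup.mkOfDetNeZero !![0, 1; v 0, v 1] ?_, fun i => ?_⟩
    · rw [Matrix.det_fin_two_of]; simpa using h0
    · fin_cases i <;> rfl

noncomputable def Lp (p : ℕ) [Fact p.Prime] (k : Type) [Field k] [CharP k p]
    (o : Option (ZMod p)) : MvPolynomial (Fin 2) k :=
  C (cst p k (wv p o 1)) * X 0 - C (cst p k (wv p o 0)) * X 1

lemma Lp_homog (o : Option (ZMod p)) : (Lp p k o).IsHomogeneous 1 :=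
  MvPolynomial.IsHomogeneous.sub (isHomogeneous_C_mul_X _ _) (isHomogeneous_C_mul_X _ _)

def Lz (p : ℕ) (o : Option (ZMod p)) (v : Fin 2 → ZMod p) : ZMod p :=
  wv p o 1 * v 0 - wv p o 0 * v 1

lemma eval_Lp (o : Option (ZMod p)) (v : Fin 2 → ZMod p) :
    eval (fun i => cst p k (v i)) (Lp p k o) = cst p k (Lz p o v) := by
  simp [Lp, Lz, map_sub, _root_.map_mul]

lemma Lz_zero_iff (o o' : Option (ZMod p)) : Lz p o (wv p o') = 0 ↔ o = o' := by
  cases o <;> cases o' <;> simp [Lz, wv, sub_eq_zero]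

lemma Lz_mul (o : Option (ZMod p)) (a : ZMod p) (w : Fin 2 → ZMod p) :
    Lz p o (fun i => a * w i) = a * Lz p o w := by
  simp only [Lz]; ring

lemma zmod_sum_pow (m : ℕ) :
    ∑ t : ZMod p, t ^ m = if m ≠ 0 ∧ (p - 1) ∣ m then -1 else 0 := by
  classical
  rcases eq_or_ne m 0 with rfl | hm
  · simp only [pow_zero, Finset.sum_const, Finset.card_univ, ZMod.card, nsmul_eq_mul, mul_one,
      ZMod.natCast_self, ne_eq, not_true_eq_false, false_and, if_false]
  · have hsplit : ∑ t : ZMod p, t ^ m = ∑ t ∈ Finset.univ \ {(0 : ZMod p)}, t ^ m := by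
      rw [← Finset.sum_sdiff (Finset.subset_univ {(0 : ZMod p)}), Finset.sum_singleton,
        zero_pow hm, add_zero]
    let φ : (ZMod p)ˣ ↪ ZMod p := ⟨fun x => x, fun _ _ h => Units.ext h⟩
    have hmap : Finset.univ.map φ = Finset.univ \ {(0 : ZMod p)} := by
      ext x
      simp only [Finset.mem_map, Finset.mem_univ, Function.Embedding.coeFn_mk, true_and,
        Finset.mem_sdiff, Finset.mem_singleton, φ]
      exact isUnit_iff_ne_zero
    have hunits : ∑ t ∈ Finset.univ \ {(0 : ZMod p)}, t ^ m
        = ∑ u : (ZMod p)ˣ, (u : ZMod p) ^ m := by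
      rw [← hmap, Finset.sum_map]
      rfl
    rw [hsplit, hunits, FiniteField.sum_pow_units, ZMod.card]
    simp [hm]

lemma sum_cst_pow (m : ℕ) :
    ∑ t : ZMod p, (cst p k t) ^ m = if m ≠ 0 ∧ (p - 1) ∣ m then (-1 : k) else 0 := by
  have h : ∑ t : ZMod p, (cst p k t) ^ m = cst p k (∑ t : ZMod p, t ^ m) := by
    rw [map_sum]
    exact Finset.sum_congr rfl fun t _ => (map_pow _ _ _).symm
  rw [h, zmod_sum_pow, apply_ite (cst p k), map_neg, _root_.map_one, map_zero]

noncomputable def psi1 (p : ℕ) [Fact p.Prime] (k : Type) [Field k] [CharP k p]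
    (f : GL (Fin 2) (ZMod p) → k) : MvPolynomial (Fin 2) k :=
  C (∑ o : Option (ZMod p), f (gw p o))

noncomputable def psi2 (p : ℕ) [Fact p.Prime] (k : Type) [Field k] [CharP k p]
    (f : GL (Fin 2) (ZMod p) → k) : MvPolynomial (Fin 2) k :=
  - ∑ o : Option (ZMod p), f (gw p o) • (Lp p k o) ^ (p - 1)

lemma psi1_homog (f : GL (Fin 2) (ZMod p) → k) : (psi1 p k f).IsHomogeneous 0 :=
  isHomogeneous_C _ _

lemma psi2_homog (f : GL (Fin 2) (ZMod p) → k) : (psi2 p k f).IsHomogeneous (p - 1) := by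
  rw [← mem_homogeneousSubmodule]
  apply neg_mem
  apply Submodule.sum_mem
  intro o _
  apply Submodule.smul_mem
  rw [mem_homogeneousSubmodule]
  simpa using (Lp_homog (k := k) o).pow (p - 1)

lemma phi_psi {f : GL (Fin 2) (ZMod p) → k} (hf : f ∈ IndTriv p k) (x : GL (Fin 2) (ZMod p)) :
    phiFun p k (psi1 p k f + psi2 p k f) x = f x := by
  obtain ⟨o₀, a, ha, hrow⟩ := exists_rep x
  have hx : f x = f (gw p o₀) :=
    indtriv_row_eq hf a (fun i => by rw [hrow i, ← gw_row o₀ i])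
  unfold phiFun psi1 psi2
  rw [map_add, eval_C, map_neg, map_sum]
  have hterm : ∀ o : Option (ZMod p),
      eval (fun i => cst p k ((x : Matrix (Fin 2) (Fin 2) (ZMod p)) 1 i))
        (f (gw p o) • (Lp p k o) ^ (p - 1))
      = f (gw p o) - (if o = o₀ then f (gw p o₀) else 0) := by
    intro o
    rw [smul_eval, map_pow]
    have hv : (fun i => cst p k ((x : Matrix (Fin 2) (Fin 2) (ZMod p)) 1 i))
        = fun i => cst p k (a * wv p o₀ i) := by
      funext i; rw [hrow i]
    rw [hv, eval_Lp, Lz_mul]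
    by_cases ho : o = o₀
    · subst ho
      rw [(Lz_zero_iff o o).mpr rfl, mul_zero, map_zero,
        zero_pow (Nat.sub_ne_zero_of_lt (Fact.out : p.Prime).one_lt), mul_zero, if_pos rfl,
        sub_self]
    · have hLz : Lz p o (wv p o₀) ≠ 0 := fun h => ho ((Lz_zero_iff o o₀).mp h)
      rw [← map_pow, ZMod.pow_card_sub_one_eq_one (mul_ne_zero ha hLz), _root_.map_one,
        mul_one, if_neg ho, sub_zero]
  rw [Finset.sum_congr rfl (fun o _ => hterm o), Finset.sum_sub_distrib,
    Finset.sum_ite_eq' Finset.univ o₀ (fun _ => f (gw p o₀)), if_pos (Finset.mem_univ o₀)]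
  rw [hx]
  ring

lemma homog0_eq_C {c : MvPolynomial (Fin 2) k} (hc : c.IsHomogeneous 0) :
    c = C (coeff 0 c) := by
  classical
  ext d
  by_cases hd : d = 0
  · subst hd; simp
  · rw [coeff_C, if_neg (fun h => hd h.symm)]
    by_contra hne
    have h0 := homog_deg hc hne
    have h01 : d 0 = 0 ∧ d 1 = 0 := by omega
    apply hd
    ext i
    fin_cases i
    · exact h01.1
    · exact h01.2

lemma coeff_zero_of_vanish {P : MvPolynomial (Fin 2) k} (hP : P.IsHomogeneous (p - 1)) (c₀ : k)
    (H : ∀ t : ZMod p, c₀ + eval (fun i => if i = 0 then 1 else cst p k t) P = 0)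
    (d : Fin 2 →₀ ℕ) (hd : d 0 ≠ p - 1) : coeff d P = 0 := by
  classical
  by_contra hne
  have hp2 : 2 ≤ p := (Fact.out : p.Prime).two_le
  have hdeg : d 0 + d 1 = p - 1 := homog_deg hP hne
  have key : (0 : k) = ∑ t : ZMod p, (cst p k t) ^ (d 0) *
      (c₀ + eval (fun i => if i = 0 then 1 else cst p k t) P) := by
    symm
    apply Finset.sum_eq_zero
    intro t _
    rw [H t, mul_zero]
  have hev : ∀ t : ZMod p, eval (fun i => if i = 0 then 1 else cst p k t) P
      = ∑ d' ∈ P.support, coeff d' P * (cst p k t) ^ (d' 1) := by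
    intro t
    rw [eval_eq']
    apply Finset.sum_congr rfl
    intro d' _
    rw [Fin.prod_univ_two, if_pos rfl, if_neg (by decide : ¬(1 : Fin 2) = 0), one_pow, one_mul]
  have halg : ∑ t : ZMod p, (cst p k t) ^ (d 0) *
        (c₀ + eval (fun i => if i = 0 then 1 else cst p k t) P)
      = (∑ t : ZMod p, (cst p k t) ^ (d 0)) * c₀
        + ∑ d' ∈ P.support, coeff d' P * ∑ t : ZMod p, (cst p k t) ^ (d 0 + d' 1) := by
    simp_rw [hev, mul_add, Finset.mul_sum, Finset.sum_add_distrib, Finset.sum_mul]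
    congr 1
    rw [Finset.sum_comm]
    apply Finset.sum_congr rfl
    intro d' _
    apply Finset.sum_congr rfl
    intro t _
    rw [pow_add]
    ring
  have hS0 : (∑ t : ZMod p, (cst p k t) ^ (d 0)) = 0 := by
    rw [sum_cst_pow, if_neg]
    rintro ⟨h1, h2⟩
    have := Nat.le_of_dvd (Nat.pos_of_ne_zero h1) h2
    omega
  have hterm : ∀ d' ∈ P.support, coeff d' P * ∑ t : ZMod p, (cst p k t) ^ (d 0 + d' 1)
      = if d' = d then -coeff d P else 0 := by
    intro d' hd'
    have hdeg' : d' 0 + d' 1 = p - 1 := homog_deg hP (mem_support_iff.mp hd')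
    rw [sum_cst_pow]
    by_cases he : d' = d
    · have hcond : d 0 + d' 1 ≠ 0 ∧ (p - 1) ∣ (d 0 + d' 1) := by
        rw [he]; exact ⟨by omega, ⟨1, by omega⟩⟩
      rw [if_pos hcond, if_pos he, he]
      ring
    · rw [if_neg he]
      have hcondf : ¬(d 0 + d' 1 ≠ 0 ∧ (p - 1) ∣ (d 0 + d' 1)) := by
        rintro ⟨h1, h2⟩
        obtain ⟨m, hm⟩ := h2
        have hmpos : 0 < m := by
          rcases Nat.eq_zero_or_pos m with rfl | h
          · omega
          · exact h
        have hmlt : m < 2 := by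
          by_contra hge
          push_neg at hge
          have h2le : (p - 1) * 2 ≤ (p - 1) * m := Nat.mul_le_mul_left _ hge
          omega
        have hm1 : m = 1 := by omega
        subst hm1
        apply he
        have h00 : d' 0 = d 0 := by omega
        have h10 : d' 1 = d 1 := by omega
        ext i
        fin_cases i
        · exact h00
        · exact h10
      rw [if_neg hcondf, mul_zero]
  rw [halg, hS0, zero_mul, zero_add, Finset.sum_congr rfl hterm,
    Finset.sum_ite_eq' P.support d (fun _ => -coeff d P),
    if_pos (mem_support_iff.mpr hne)] at key
  exact hne (neg_eq_zero.mp key.symm)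

lemma swap_vanish {P : MvPolynomial (Fin 2) k} (hP : P.IsHomogeneous (p - 1)) (c₀ : k)
    (H : ∀ v : Fin 2 → ZMod p, (v 0 ≠ 0 ∨ v 1 ≠ 0) →
      c₀ + eval (fun i => cst p k (v i)) P = 0) :
    P = 0 ∧ c₀ = 0 := by
  classical
  have hp2 : 2 ≤ p := (Fact.out : p.Prime).two_le
  have H1 : ∀ t : ZMod p, c₀ + eval (fun i => if i = 0 then 1 else cst p k t) P = 0 := by
    intro t
    have h := H ![1, t] (Or.inl one_ne_zero)
    have hfun : (fun i => cst p k (![1, t] i))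
        = fun i : Fin 2 => if i = 0 then 1 else cst p k t := by
      funext i
      fin_cases i <;> simp
    rwa [hfun] at h
  set P' : MvPolynomial (Fin 2) k := rename (⇑(Equiv.swap (0 : Fin 2) 1)) P with hP'def
  have hP' : P'.IsHomogeneous (p - 1) := hP.rename_isHomogeneous
  have H2 : ∀ t : ZMod p, c₀ + eval (fun i => if i = 0 then 1 else cst p k t) P' = 0 := by
    intro t
    rw [hP'def, eval_rename]
    have h := H ![t, 1] (Or.inr one_ne_zero)
    have hfun : (fun i => cst p k (![t, 1] i))
        = (fun i : Fin 2 => if i = 0 then 1 else cst p k t) ∘ ⇑(Equiv.swap (0 : Fin 2) 1) := by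
      funext i
      fin_cases i <;> simp
    rwa [hfun] at h
  have hP0 : P = 0 := by
    ext d
    simp only [coeff_zero]
    by_cases h0 : d 0 = p - 1
    · by_cases hc : coeff d P = 0
      · exact hc
      · exfalso
        have hdeg : d 0 + d 1 = p - 1 := homog_deg hP hc
        have hD : (Finsupp.mapDomain (⇑(Equiv.swap (0 : Fin 2) 1)) d) 0 = d 1 := by
          have h := Finsupp.mapDomain_apply (Equiv.injective (Equiv.swap (0 : Fin 2) 1)) d 1
          rwa [Equiv.swap_apply_right] at h
        have := coeff_zero_of_vanish hP' c₀ H2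
          (Finsupp.mapDomain (⇑(Equiv.swap (0 : Fin 2) 1)) d) (by omega)
        rw [hP'def, coeff_rename_mapDomain _ (Equiv.injective _)] at this
        exact hc this
    · exact coeff_zero_of_vanish hP c₀ H1 d h0
  refine ⟨hP0, ?_⟩
  have := H1 0
  rwa [hP0, map_zero, add_zero] at this

lemma phi_inj {c P : MvPolynomial (Fin 2) k} (hc : c.IsHomogeneous 0)
    (hP : P.IsHomogeneous (p - 1))
    (H : ∀ x : GL (Fin 2) (ZMod p), phiFun p k (c + P) x = 0) : c = 0 ∧ P = 0 := by
  have hcC := homog0_eq_C hc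
  have Hv : ∀ v : Fin 2 → ZMod p, (v 0 ≠ 0 ∨ v 1 ≠ 0) →
      coeff 0 c + eval (fun i => cst p k (v i)) P = 0 := by
    intro v hv
    obtain ⟨g, hg⟩ := exists_GL_row v hv
    have h := H g
    unfold phiFun at h
    rw [map_add] at h
    have hfun : (fun i => cst p k ((g : Matrix (Fin 2) (Fin 2) (ZMod p)) 1 i))
        = fun i => cst p k (v i) := by
      funext i; rw [hg i]
    rw [hfun] at h
    nth_rewrite 1 [hcC] at h
    rw [eval_C] at h
    exact h
  obtain ⟨hP0, hc0⟩ := swap_vanish hP _ Hv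
  refine ⟨?_, hP0⟩
  rw [hcC, hc0, map_zero]

lemma eval_symAct (g : Matrix (Fin 2) (Fin 2) (ZMod p)) (v : Fin 2 → k)
    (Q : MvPolynomial (Fin 2) k) :
    eval v (symAct p k g Q) = eval (fun i => ∑ j : Fin 2, cst p k (g j i) * v j) Q := by
  unfold symAct
  rw [aeval_def, eval₂_comp_left (eval v)]
  have hid : ((eval v).comp (algebraMap k (MvPolynomial (Fin 2) k))) = RingHom.id k := by
    ext a
    simp [algebraMap_eq]
  rw [hid, eval₂_id]
  have hpt : (⇑(eval v) ∘ fun i => ∑ j : Fin 2,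
      (ZMod.castHom (dvd_refl p) k (g j i)) • (X j : MvPolynomial (Fin 2) k))
      = fun i => ∑ j : Fin 2, cst p k (g j i) * v j := by
    funext i
    simp [smul_eval, cst]
  rw [hpt]

lemma symAct_homog {Q : MvPolynomial (Fin 2) k} {n : ℕ} (hQ : Q.IsHomogeneous n)
    (g : Matrix (Fin 2) (Fin 2) (ZMod p)) : (symAct p k g Q).IsHomogeneous n := by
  unfold symAct
  have hg : ∀ i : Fin 2, ((∑ j : Fin 2,
      (ZMod.castHom (dvd_refl p) k (g j i)) • (X j : MvPolynomial (Fin 2) k))).IsHomogeneous 1 := by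
    intro i
    rw [← mem_homogeneousSubmodule]
    exact Submodule.sum_mem _ fun j _ => Submodule.smul_mem _ _
      (by rw [mem_homogeneousSubmodule]; exact isHomogeneous_X _ _)
  simpa using hQ.aeval _ hg

end IndDecompAux

open IndDecompAux

/-- `Ind_{B(F_p)}^{GL₂(F_p)}(1) ≅ Sym⁰ ⊕ Sym^{p-1}` as representations of `GL₂(F_p)`, where
`GL₂(F_p)` acts on the induced space by right translation and on each `Sym` factor by linear
substitution. -/
theorem ind_trivial_decomposition (p : ℕ) [Fact p.Prime]
    (k : Type) [Field k] [IsAlgClosed k] [CharP k p] :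
    ∃ e : IndTriv p k ≃ₗ[k]
        (homogeneousSubmodule (Fin 2) k 0 × homogeneousSubmodule (Fin 2) k (p - 1)),
      ∀ (g : GL (Fin 2) (ZMod p)) (f₁ f₂ : IndTriv p k),
        (∀ x, (f₂ : GL (Fin 2) (ZMod p) → k) x = (f₁ : GL (Fin 2) (ZMod p) → k) (x * g)) →
        ((e f₂).1 : MvPolynomial (Fin 2) k) =
            symAct p k (g : Matrix (Fin 2) (Fin 2) (ZMod p)) ((e f₁).1 : MvPolynomial (Fin 2) k) ∧
          ((e f₂).2 : MvPolynomial (Fin 2) k) =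
            symAct p k (g : Matrix (Fin 2) (Fin 2) (ZMod p)) ((e f₁).2 : MvPolynomial (Fin 2) k) := by
  classical
  let Φ : (homogeneousSubmodule (Fin 2) k 0 × homogeneousSubmodule (Fin 2) k (p - 1)) →ₗ[k]
      IndTriv p k :=
    { toFun := fun q => ⟨phiFun p k
        ((q.1 : MvPolynomial (Fin 2) k) + (q.2 : MvPolynomial (Fin 2) k)),
        phiFun_mem q.1.2 q.2.2⟩
      map_add' := by
        intro q r
        apply Subtype.ext
        funext x
        show phiFun p k _ x = phiFun p k _ x + phiFun p k _ x
        unfold phiFun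
        rw [← map_add]
        congr 1
        show ((q.1 + r.1 : homogeneousSubmodule (Fin 2) k 0) : MvPolynomial (Fin 2) k)
            + ((q.2 + r.2 : homogeneousSubmodule (Fin 2) k (p - 1)) : MvPolynomial (Fin 2) k) = _
        rw [Submodule.coe_add, Submodule.coe_add]
        ring
      map_smul' := by
        intro a q
        apply Subtype.ext
        funext x
        show phiFun p k _ x = a * phiFun p k _ x
        unfold phiFun
        rw [← smul_eval]
        congr 1
        show ((a • q.1 : homogeneousSubmodule (Fin 2) k 0) : MvPolynomial (Fin 2) k)
            + ((a • q.2 : homogeneousSubmodule (Fin 2) k (p - 1)) : MvPolynomial (Fin 2) k) = _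
        rw [Submodule.coe_smul, Submodule.coe_smul, smul_add] }
  have hinj : Function.Injective Φ := by
    rw [injective_iff_map_eq_zero]
    intro q hq
    have hzero : ∀ x, phiFun p k
        ((q.1 : MvPolynomial (Fin 2) k) + (q.2 : MvPolynomial (Fin 2) k)) x = 0 :=
      fun x => congrFun (congrArg Subtype.val hq) x
    obtain ⟨h1, h2⟩ := phi_inj q.1.2 q.2.2 hzero
    exact Prod.ext (Subtype.ext h1) (Subtype.ext h2)
  have hsurj : Function.Surjective Φ := by
    intro f
    refine ⟨(⟨psi1 p k f, psi1_homog _⟩, ⟨psi2 p k f, psi2_homog _⟩), ?_⟩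
    apply Subtype.ext
    funext x
    exact phi_psi f.2 x
  let E := LinearEquiv.ofBijective Φ ⟨hinj, hsurj⟩
  refine ⟨E.symm, ?_⟩
  intro g f₁ f₂ hf
  set q := E.symm f₁ with hq
  have hΦq : Φ q = f₁ := E.apply_symm_apply f₁
  have hmem1 : symAct p k (g : Matrix (Fin 2) (Fin 2) (ZMod p)) (q.1 : MvPolynomial (Fin 2) k)
      ∈ homogeneousSubmodule (Fin 2) k 0 := symAct_homog q.1.2 _
  have hmem2 : symAct p k (g : Matrix (Fin 2) (Fin 2) (ZMod p)) (q.2 : MvPolynomial (Fin 2) k)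
      ∈ homogeneousSubmodule (Fin 2) k (p - 1) := symAct_homog q.2.2 _
  set q₂ := ((⟨_, hmem1⟩ : homogeneousSubmodule (Fin 2) k 0),
    (⟨_, hmem2⟩ : homogeneousSubmodule (Fin 2) k (p - 1))) with hq₂
  have hΦq₂ : Φ q₂ = f₂ := by
    apply Subtype.ext
    funext x
    show phiFun p k (symAct p k _ (q.1 : MvPolynomial (Fin 2) k)
        + symAct p k _ (q.2 : MvPolynomial (Fin 2) k)) x = (f₂ : GL (Fin 2) (ZMod p) → k) x
    rw [hf x]
    have hval : (f₁ : GL (Fin 2) (ZMod p) → k) (x * g)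
        = phiFun p k ((q.1 : MvPolynomial (Fin 2) k) + (q.2 : MvPolynomial (Fin 2) k)) (x * g) := by
      rw [← hΦq]; rfl
    rw [hval]
    unfold phiFun
    rw [map_add (eval _), eval_symAct, eval_symAct, map_add (eval _)]
    have hpt : (fun i => ∑ j : Fin 2,
        cst p k ((g : Matrix (Fin 2) (Fin 2) (ZMod p)) j i) *
          cst p k ((x : Matrix (Fin 2) (Fin 2) (ZMod p)) 1 j))
        = fun i => cst p k
          (((x * g : GL (Fin 2) (ZMod p)) : Matrix (Fin 2) (Fin 2) (ZMod p)) 1 i) := by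
      funext i
      have hmul : ((x * g : GL (Fin 2) (ZMod p)) : Matrix (Fin 2) (Fin 2) (ZMod p)) 1 i
          = ∑ j : Fin 2, (x : Matrix (Fin 2) (Fin 2) (ZMod p)) 1 j *
            (g : Matrix (Fin 2) (Fin 2) (ZMod p)) j i := Matrix.mul_apply
      rw [hmul, map_sum]
      exact Finset.sum_congr rfl fun j _ => by rw [_root_.map_mul, mul_comm]
    rw [hpt]
  have hE2 : E.symm f₂ = q₂ := by
    have hEq : E q₂ = f₂ := by rw [← hΦq₂]; rfl
    rw [← hEq, E.symm_apply_apply]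
  rw [hE2]
  exact ⟨rfl, rfl⟩
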